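/- Let A be a commutative multiplicative hyperring with identity and let Q be a radical 𝒞-hyperideal of A (i.e. rad(Q) = Q), and let u,v ∈ ℕ with u > v. Then Q is a (u,v)-absorbing hyperideal of A if and only if Q is a v-absorbing hyperideal of A. -/

import Mathlib

/-- A commutative multiplicative hyperring with identity: `(A,+)` is a commutative group,
`∘ = hmul` is a commutative associative hyperoperation with nonempty values, satisfying
`x∘(y+z) ⊆ x∘y + x∘z`, `x∘(−y) = (−x)∘y = −(x∘y)`, and `a ∈ a∘1` for all `a`. -/
class CommHyperring (A : Type*) [AddCommGroup A] [One A] where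
  hmul : A → A → Set A
  hmul_nonempty : ∀ x y : A, (hmul x y).Nonempty
  hmul_comm : ∀ x y : A, hmul x y = hmul y x
  hmul_assoc : ∀ x y z : A, (⋃ a ∈ hmul y z, hmul x a) = ⋃ b ∈ hmul x y, hmul b z
  hmul_add : ∀ x y z : A, hmul x (y + z) ⊆ Set.image2 (· + ·) (hmul x y) (hmul x z)
  hmul_neg : ∀ x y : A, hmul x (-y) = Neg.neg '' hmul x y
  neg_hmul : ∀ x y : A, hmul (-x) y = Neg.neg '' hmul x y
  one_mem : ∀ a : A, a ∈ hmul a 1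

open CommHyperring

variable {A : Type*} [AddCommGroup A] [One A] [CommHyperring A]

/-- The hyperoperation extended to subsets: `X∘Y = ⋃_{x∈X, y∈Y} x∘y`. -/
def sMul (X Y : Set A) : Set A := ⋃ x ∈ X, ⋃ y ∈ Y, hmul x y

/-- The product `x₁∘⋯∘xₙ` of the members of a list. -/
def hProd : List A → Set A
  | [] => {1}
  | [a] => {a}
  | a :: l => ⋃ c ∈ hProd l, hmul a c

/-- `xⁿ = x∘⋯∘x` (`n` factors). -/
def hPow (a : A) (n : ℕ) : Set A := hProd (List.replicate n a)

/-- `a` is a unit if `1 ∈ a∘b` for some `b`. -/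
def IsUnitH (a : A) : Prop := ∃ b : A, (1 : A) ∈ hmul a b

/-- A hyperideal of `A`. -/
def IsHyperideal (B : Set A) : Prop :=
  B.Nonempty ∧ (∀ x ∈ B, ∀ y ∈ B, x - y ∈ B) ∧ ∀ r : A, ∀ x ∈ B, hmul r x ⊆ B

def IsProperHyperideal (B : Set A) : Prop := IsHyperideal B ∧ B ≠ Set.univ

/-- A prime hyperideal. -/
def IsPrimeHyperideal (B : Set A) : Prop :=
  IsProperHyperideal B ∧ ∀ x y : A, hmul x y ⊆ B → x ∈ B ∨ y ∈ B

/-- The prime radical: the intersection of all prime hyperideals containing `B`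
(`= A` if there are none). -/
def radH (B : Set A) : Set A := ⋂₀ {P : Set A | IsPrimeHyperideal P ∧ B ⊆ P}

/-- A `𝒞`-hyperideal: meets a finite product `⇒` contains it. -/
def IsCHyperideal (B : Set A) : Prop :=
  IsHyperideal B ∧ ∀ l : List A, l ≠ [] → (hProd l ∩ B).Nonempty → hProd l ⊆ B

def setAdd (X Y : Set A) : Set A := Set.image2 (· + ·) X Y

/-- The sum `C₁ + ⋯ + Cₙ` of the finite products coded by a list of lists. -/
def sumProds (L : List (List A)) : Set A := L.foldr (fun l S => setAdd (hProd l) S) {0}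

/-- A strong `𝒞`-hyperideal: meets a finite sum of finite products `⇒` contains it. -/
def IsStrongCHyperideal (B : Set A) : Prop :=
  IsHyperideal B ∧ ∀ L : List (List A), L ≠ [] → (∀ l ∈ L, l ≠ []) →
    (sumProds L ∩ B).Nonempty → sumProds L ⊆ B

/-- A `v`-absorbing hyperideal. -/
def IsNAbsorbing (Q : Set A) (v : ℕ) : Prop :=
  IsProperHyperideal Q ∧ ∀ l : List A, l.length = v + 1 → hProd l ⊆ Q →
    ∃ l', l'.Sublist l ∧ l'.length = v ∧ hProd l' ⊆ Q

/-- A `(u,v)`-absorbing hyperideal. -/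
def IsUVAbsorbing (Q : Set A) (u v : ℕ) : Prop :=
  IsProperHyperideal Q ∧ ∀ l : List A, l.length = u → (∀ x ∈ l, ¬IsUnitH x) → hProd l ⊆ Q →
    ∃ l', l'.Sublist l ∧ l'.length = v ∧ hProd l' ⊆ Q

/-- An `AB`-`(u,v)`-absorbing hyperideal. -/
def IsABUVAbsorbing (Q : Set A) (u v : ℕ) : Prop :=
  IsProperHyperideal Q ∧ ∀ l : List A, l.length = u → hProd l ⊆ Q →
    ∃ l', l'.Sublist l ∧ l'.length = v ∧ hProd l' ⊆ Q

/-- A `(u,v)`-absorbing prime hyperideal. -/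
def IsUVAbsorbingPrime (Q : Set A) (u v : ℕ) : Prop :=
  IsProperHyperideal Q ∧ ∀ l : List A, l.length = u → (∀ x ∈ l, ¬IsUnitH x) → hProd l ⊆ Q →
    hProd (l.take v) ⊆ Q ∨ hProd (l.drop v) ⊆ Q

/-- A maximal hyperideal. -/
def IsMaximalHyperideal (M : Set A) : Prop :=
  IsProperHyperideal M ∧ ∀ B : Set A, IsHyperideal B → M ⊂ B → B = Set.univ

/-- `A` is local if it has exactly one maximal hyperideal. -/
def IsLocalH (A : Type*) [AddCommGroup A] [One A] [CommHyperring A] : Prop :=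
  ∃! M : Set A, IsMaximalHyperideal M

/-- `P` is a prime hyperideal minimal over `Q`. -/
def MinimalPrimeOver (Q P : Set A) : Prop :=
  IsPrimeHyperideal P ∧ Q ⊆ P ∧
    ∀ P' : Set A, IsPrimeHyperideal P' → Q ⊆ P' → P' ⊆ P → P' = P

/-- `Iⁿ = ⋃ {x₁∘⋯∘xₙ : xᵢ ∈ I}`. -/
def idealPow (I : Set A) (n : ℕ) : Set A :=
  ⋃ l ∈ {l : List A | l.length = n ∧ ∀ x ∈ l, x ∈ I}, hProd l

/-- `I₁∘⋯∘Iₙ = ⋃ {x₁∘⋯∘xₙ : xᵢ ∈ Iᵢ}`. -/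
def idealProd (L : List (Set A)) : Set A :=
  ⋃ l ∈ {l : List A | List.Forall₂ (· ∈ ·) l L}, hProd l

/-- `Abs(Q)`: the minimal `v` such that `Q` is `v`-absorbing. -/
noncomputable def AbsN (Q : Set A) : ℕ := sInf {v : ℕ | IsNAbsorbing Q v}

/-- `abs(Q)`: the minimal `v` such that `Q` is `(Abs(Q)+1, v)`-absorbing. -/
noncomputable def absN (Q : Set A) : ℕ := sInf {v : ℕ | IsUVAbsorbing Q (AbsN Q + 1) v}

/-- A primary hyperideal. -/
def IsPrimaryHyperideal (Q : Set A) : Prop :=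
  IsProperHyperideal Q ∧ ∀ x y : A, hmul x y ⊆ Q → x ∈ Q ∨ ∃ t : ℕ, 1 ≤ t ∧ hPow y t ⊆ Q

/-- `A` is a hyperfield if every nonzero element is a unit. -/
def IsHyperfield (A : Type*) [AddCommGroup A] [One A] [CommHyperring A] : Prop :=
  ∀ x : A, x ≠ 0 → IsUnitH x

/-- `(Q : x) = {a : a∘x ⊆ Q}`. -/
def colonH (Q : Set A) (x : A) : Set A := {a : A | hmul a x ⊆ Q}

/-- `J(A)`: the intersection of all maximal hyperideals of `A`. -/
def JacobsonH (A : Type*) [AddCommGroup A] [One A] [CommHyperring A] : Set A :=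
  ⋂₀ {M : Set A | IsMaximalHyperideal M}

section Aux
variable {A : Type*} [AddCommGroup A] [One A] [CommHyperring A]

lemma mem_sMul {X Y : Set A} {t : A} : t ∈ sMul X Y ↔ ∃ x ∈ X, ∃ y ∈ Y, t ∈ hmul x y := by
  simp [sMul]

lemma sMul_comm (X Y : Set A) : sMul X Y = sMul Y X := by
  ext t
  simp only [mem_sMul]
  constructor <;> rintro ⟨x, hx, y, hy, ht⟩ <;>
    exact ⟨y, hy, x, hx, by rwa [hmul_comm]⟩

lemma sMul_assoc (X Y Z : Set A) : sMul (sMul X Y) Z = sMul X (sMul Y Z) := by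
  ext t
  simp only [mem_sMul]
  constructor
  · rintro ⟨b, ⟨x, hx, y, hy, hb⟩, z, hz, ht⟩
    have h1 : t ∈ ⋃ b ∈ hmul x y, hmul b z := Set.mem_biUnion hb ht
    rw [← hmul_assoc] at h1
    obtain ⟨a, ha, hta⟩ := Set.mem_iUnion₂.mp h1
    exact ⟨x, hx, a, ⟨y, hy, z, hz, ha⟩, hta⟩
  · rintro ⟨x, hx, a, ⟨y, hy, z, hz, ha⟩, ht⟩
    have h1 : t ∈ ⋃ a ∈ hmul y z, hmul x a := Set.mem_biUnion ha ht
    rw [hmul_assoc] at h1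
    obtain ⟨b, hb, htb⟩ := Set.mem_iUnion₂.mp h1
    exact ⟨b, ⟨x, hx, y, hy, hb⟩, z, hz, htb⟩

lemma sMul_mono {X X' Y Y' : Set A} (h1 : X ⊆ X') (h2 : Y ⊆ Y') : sMul X Y ⊆ sMul X' Y' := by
  intro t ht
  obtain ⟨x, hx, y, hy, hxy⟩ := mem_sMul.mp ht
  exact mem_sMul.mpr ⟨x, h1 hx, y, h2 hy, hxy⟩

lemma sMul_singleton_singleton (a b : A) : sMul {a} ({b} : Set A) = hmul a b := by
  simp [sMul]

lemma hProd_cons (a : A) {l : List A} (h : l ≠ []) :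
    hProd (a :: l) = sMul {a} (hProd l) := by
  cases l with
  | nil => exact absurd rfl h
  | cons b m => simp [hProd, sMul]

lemma hProd_nonempty (l : List A) : (hProd l).Nonempty := by
  induction l with
  | nil => exact ⟨1, rfl⟩
  | cons a l ih =>
    cases l with
    | nil => exact ⟨a, rfl⟩
    | cons b m =>
      obtain ⟨c, hc⟩ := ih
      obtain ⟨t, ht⟩ := hmul_nonempty a c
      rw [hProd_cons a (by simp)]
      exact ⟨t, mem_sMul.mpr ⟨a, rfl, c, hc, ht⟩⟩

lemma hProd_append {l₁ l₂ : List A} (h₁ : l₁ ≠ []) (h₂ : l₂ ≠ []) :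
    hProd (l₁ ++ l₂) = sMul (hProd l₁) (hProd l₂) := by
  induction l₁ with
  | nil => exact absurd rfl h₁
  | cons a m ih =>
    cases m with
    | nil =>
      rw [List.singleton_append, hProd_cons a h₂]
      rfl
    | cons b m' =>
      have hm : (b :: m') ≠ [] := by simp
      have hap : ((b :: m') ++ l₂) ≠ [] := by simp
      rw [List.cons_append, hProd_cons a hap, ih hm, hProd_cons a hm,
        ← sMul_assoc]

lemma hProd_extract (x : A) {l₁ l₂ : List A} (h : l₁ ++ l₂ ≠ []) :
    hProd (l₁ ++ x :: l₂) = sMul {x} (hProd (l₁ ++ l₂)) := by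
  rcases List.eq_nil_or_concat l₁ with rfl | _
  · rw [List.nil_append]; exact hProd_cons x (by simpa using h)
  · have h₁ : l₁ ≠ [] := by rintro rfl; simp_all
    cases l₂ with
    | nil =>
      rw [List.append_nil, hProd_append h₁ (by simp : [x] ≠ ([] : List A)),
        sMul_comm]
      rfl
    | cons c m =>
      have h₂ : (c :: m) ≠ [] := by simp
      rw [hProd_append h₁ (by simp), hProd_cons x h₂,
        hProd_append h₁ h₂, ← sMul_assoc, ← sMul_assoc, sMul_comm (hProd l₁) {x}]

lemma sMul_subset_ideal {B : Set A} (hB : IsHyperideal B) {X Y : Set A} (hY : Y ⊆ B) :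
    sMul X Y ⊆ B := by
  intro t ht
  obtain ⟨x, _, y, hy, hxy⟩ := mem_sMul.mp ht
  exact hB.2.2 x y (hY hy) hxy

lemma hProd_pad {B : Set A} (hB : IsHyperideal B) {l : List A} (hl : l ≠ [])
    (hQ : hProd l ⊆ B) (m : List A) : hProd (l ++ m) ⊆ B := by
  cases m with
  | nil => rw [List.append_nil]; exact hQ
  | cons b m' =>
    rw [hProd_append hl (by simp), sMul_comm]
    exact sMul_subset_ideal hB hQ

lemma hProd_subset_of_mem {B : Set A} (hB : IsHyperideal B) {l : List A} {x : A}
    (hx : x ∈ l) (hxB : x ∈ B) : hProd l ⊆ B := by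
  induction l with
  | nil => simp at hx
  | cons y rest ih =>
    cases rest with
    | nil =>
      simp only [List.mem_singleton] at hx
      subst hx
      intro t ht
      rw [show hProd [x] = {x} from rfl] at ht
      simpa using ht ▸ hxB
    | cons b m =>
      rw [hProd_cons y (by simp)]
      rcases List.mem_cons.mp hx with rfl | hx'
      · rw [sMul_comm]; exact sMul_subset_ideal hB (by simpa using hxB)
      · exact sMul_subset_ideal hB (ih hx')

lemma exists_mem_of_hProd_subset_prime {P : Set A} (hP : IsPrimeHyperideal P)
    {l : List A} (hl : l ≠ []) (h : hProd l ⊆ P) : ∃ x ∈ l, x ∈ P := by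
  induction l with
  | nil => exact absurd rfl hl
  | cons y rest ih =>
    cases rest with
    | nil =>
      refine ⟨y, by simp, ?_⟩
      have : y ∈ hProd [y] := by rw [show hProd [y] = {y} from rfl]; rfl
      exact h this
    | cons b m =>
      rw [hProd_cons y (by simp)] at h
      by_cases hy : y ∈ P
      · exact ⟨y, by simp, hy⟩
      · have hrest : hProd (b :: m) ⊆ P := by
          intro c hc
          obtain ⟨e, he⟩ := hmul_nonempty y c
          have hsub : hmul y c ⊆ P := fun t ht =>
            h (mem_sMul.mpr ⟨y, rfl, c, hc, ht⟩)
          rcases hP.2 y c hsub with h' | h'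
          · exact absurd h' hy
          · exact h'
        obtain ⟨x, hx, hxP⟩ := ih (by simp) hrest
        exact ⟨x, by simp [hx], hxP⟩

lemma unit_cancel {Q : Set A} (hQ : IsHyperideal Q) {x : A} (hx : IsUnitH x)
    {S : Set A} (h : sMul {x} S ⊆ Q) : S ⊆ Q := by
  obtain ⟨w, hw⟩ := hx
  intro p hp
  have h1 : hmul p 1 ⊆ sMul {p} (hmul x w) := by
    intro t ht
    exact mem_sMul.mpr ⟨p, rfl, 1, hw, ht⟩
  have h2 : sMul {p} (hmul x w) = sMul (hmul p x) {w} := by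
    rw [← sMul_singleton_singleton x w, ← sMul_assoc, sMul_singleton_singleton]
  have h3 : hmul p x ⊆ Q := by
    rw [hmul_comm]
    intro t ht
    exact h (mem_sMul.mpr ⟨x, rfl, p, hp, ht⟩)
  have h4 : sMul (hmul p x) {w} ⊆ Q := by
    rw [sMul_comm]; exact sMul_subset_ideal hQ h3
  exact (h1.trans (h2 ▸ h4)) (one_mem p)

lemma exists_sublist_between {α : Type*} {s l : List α} (h : s.Sublist l) :
    ∀ n : ℕ, s.length ≤ n → n ≤ l.length → ∃ t, s.Sublist t ∧ t.Sublist l ∧ t.length = n := by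
  induction h with
  | slnil =>
    intro n h1 h2
    have hn : n = 0 := by simpa using h2
    subst hn
    exact ⟨[], List.Sublist.refl _, List.Sublist.refl _, rfl⟩
  | @cons l₁ l₂ a h ih =>
    intro n h1 h2
    rcases Nat.lt_or_ge n (l₂.length + 1) with hn | hn
    · obtain ⟨t, ht1, ht2, ht3⟩ := ih n h1 (by omega)
      exact ⟨t, ht1, ht2.trans (List.sublist_cons_self a l₂), ht3⟩
    · have hn' : n = l₂.length + 1 := by simp at h2; omega
      exact ⟨a :: l₂, (h.trans (List.sublist_cons_self a l₂)), List.Sublist.refl _, by simp [hn']⟩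
  | @cons_cons l₁ l₂ a h ih =>
    intro n h1 h2
    simp only [List.length_cons] at h1 h2
    obtain ⟨t, ht1, ht2, ht3⟩ := ih (n - 1) (by omega) (by omega)
    exact ⟨a :: t, ht1.cons₂ a, ht2.cons₂ a, by simp only [List.length_cons, ht3]; omega⟩

end Aux

/-- a radical `𝒞`-hyperideal is `(u,v)`-absorbing iff it is
`v`-absorbing. -/
theorem uv_absorbing_iff_nAbsorbing_of_radical (Q : Set A) (u v : ℕ)
    (hv : 1 ≤ v) (hvu : v < u) (hC : IsCHyperideal Q) (hrad : radH Q = Q) :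
    IsUVAbsorbing Q u v ↔ IsNAbsorbing Q v := by
  constructor
  · -- (u,v)-absorbing → v-absorbing
    intro habs
    refine ⟨habs.1, ?_⟩
    intro l hlen hQl
    by_cases hunit : ∃ x ∈ l, IsUnitH x
    · obtain ⟨x, hxl, hxu⟩ := hunit
      obtain ⟨l₁, l₂, rfl⟩ := List.append_of_mem hxl
      have hlen2 : l₁.length + l₂.length = v := by
        simp only [List.length_append, List.length_cons] at hlen; omega
      have hne : l₁ ++ l₂ ≠ [] := by
        intro h
        have := congrArg List.length h
        simp only [List.length_append, List.length_nil] at this; omega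
      have hext := hProd_extract x hne
      have h2 : hProd (l₁ ++ l₂) ⊆ Q :=
        unit_cancel habs.1.1 hxu (by rw [← hext]; exact hQl)
      exact ⟨l₁ ++ l₂, (List.Sublist.refl l₁).append (List.sublist_cons_self x l₂),
        by simp [hlen2], h2⟩
    · push_neg at hunit
      have hlne : l ≠ [] := by
        intro h; rw [h] at hlen; simp at hlen
      set a := l.getLast hlne with ha
      have hal : a ∈ l := List.getLast_mem hlne
      have hnu : ∀ x ∈ l ++ List.replicate (u - (v + 1)) a, ¬IsUnitH x := by
        intro x hx
        rcases List.mem_append.mp hx with h | h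
        · exact hunit x h
        · rw [List.eq_of_mem_replicate h]; exact hunit a hal
      have hQp : hProd (l ++ List.replicate (u - (v + 1)) a) ⊆ Q :=
        hProd_pad habs.1.1 hlne hQl _
      obtain ⟨l', hsub, hlen', hQ'⟩ := habs.2 (l ++ List.replicate (u - (v + 1)) a)
        (by simp [hlen]; omega) hnu hQp
      rw [List.sublist_append_iff] at hsub
      obtain ⟨s₁, s₂, rfl, hs₁, hs₂⟩ := hsub
      obtain ⟨k, hk, rfl⟩ := List.sublist_replicate_iff.mp hs₂
      have hlen'' : s₁.length + k = v := by
        simp only [List.length_append, List.length_replicate] at hlen'; omega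
      rcases Nat.eq_zero_or_pos k with rfl | hkpos
      · exact ⟨s₁, hs₁, by omega, by simpa using hQ'⟩
      · obtain ⟨s, hsl, hslen, has, hsup⟩ :
            ∃ s : List A, s.Sublist l ∧ s.length ≤ v ∧ a ∈ s ∧ ∀ x ∈ s₁, x ∈ s := by
          by_cases hmem : a ∈ s₁
          · exact ⟨s₁, hs₁, by omega, hmem, fun x hx => hx⟩
          · have hs₁d : s₁.Sublist l.dropLast := by
              have h' : s₁.Sublist (l.dropLast ++ [a]) := by
                rw [List.dropLast_append_getLast hlne]; exact hs₁
              rw [List.sublist_append_iff] at h'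
              obtain ⟨t₁, t₂, heq, ht₁, ht₂⟩ := h'
              rcases List.sublist_singleton.mp ht₂ with rfl | rfl
              · rw [heq, List.append_nil]; exact ht₁
              · exact absurd (heq ▸ (List.mem_append.mpr (Or.inr (by simp)))) hmem
            refine ⟨s₁ ++ [a], ?_, by simp; omega, by simp, fun x hx => by simp [hx]⟩
            have := hs₁d.append (List.Sublist.refl [a])
            rwa [List.dropLast_append_getLast hlne] at this
        obtain ⟨t, hst, htl, htlen⟩ := exists_sublist_between hsl v hslen (by omega)
        refine ⟨t, htl, htlen, ?_⟩
        rw [← hrad]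
        intro w hw
        show w ∈ ⋂₀ {P : Set A | IsPrimeHyperideal P ∧ Q ⊆ P}
        rintro P ⟨hPprime, hQP⟩
        have hl'ne : (s₁ ++ List.replicate k a) ≠ [] := by
          intro h
          have := congrArg List.length h
          simp only [List.length_append, List.length_replicate, List.length_nil] at this
          omega
        obtain ⟨x, hx, hxP⟩ := exists_mem_of_hProd_subset_prime hPprime hl'ne (hQ'.trans hQP)
        have hxt : x ∈ t := by
          rcases List.mem_append.mp hx with h | h
          · exact hst.subset (hsup x h)
          · rw [List.eq_of_mem_replicate h]; exact hst.subset has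
        exact hProd_subset_of_mem hPprime.1.1 hxt hxP hw
  · -- v-absorbing → (u,v)-absorbing
    intro hN
    have key : ∀ n : ℕ, ∀ l : List A, l.length = n → v + 1 ≤ n → hProd l ⊆ Q →
        ∃ l', l'.Sublist l ∧ l'.length = v ∧ hProd l' ⊆ Q := by
      intro n
      induction n using Nat.strong_induction_on with
      | _ n ih =>
        intro l hlen hn hQl
        rcases eq_or_lt_of_le hn with heq | hlt
        · exact hN.2 l (by omega) hQl
        · -- n ≥ v + 2
          have hvle : v ≤ l.length := by omega
          have htlen : (l.take v).length = v := by rw [List.length_take]; omega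
          have hdlen : (l.drop v).length = n - v := by rw [List.length_drop, hlen]
          have htne : l.take v ≠ [] := by
            intro h; rw [h] at htlen; simp at htlen; omega
          have hdne : l.drop v ≠ [] := by
            intro h; rw [h] at hdlen; simp at hdlen; omega
          obtain ⟨c, hc⟩ := hProd_nonempty (l.drop v)
          have hQl' : sMul (hProd (l.take v)) (hProd (l.drop v)) ⊆ Q := by
            rw [← hProd_append htne hdne, List.take_append_drop]; exact hQl
          have h1 : hProd (l.take v ++ [c]) ⊆ Q := by
            rw [hProd_append htne (by simp), show hProd [c] = {c} from rfl]
            exact (sMul_mono (subset_refl _) (Set.singleton_subset_iff.mpr hc)).trans hQl'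
          obtain ⟨l', hsub, hlen', hQ'⟩ := hN.2 (l.take v ++ [c])
            (by simp [htlen]) h1
          rw [List.sublist_append_iff] at hsub
          obtain ⟨s₁, s₂, rfl, hs₁, hs₂⟩ := hsub
          rcases List.sublist_singleton.mp hs₂ with rfl | rfl
          · refine ⟨s₁, hs₁.trans (List.take_sublist v l), by simpa using hlen',
              by simpa using hQ'⟩
          · have hs₁len : s₁.length = v - 1 := by
              simp only [List.length_append, List.length_cons, List.length_nil] at hlen'
              omega
            have hLsub : (s₁ ++ l.drop v).Sublist l := by
              have := hs₁.append (List.Sublist.refl (l.drop v))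
              rwa [List.take_append_drop] at this
            have hLne : s₁ ++ l.drop v ≠ [] := by
              intro h
              have := congrArg List.length h
              simp only [List.length_append, List.length_nil, hdlen] at this
              omega
            have hint : (hProd (s₁ ++ l.drop v) ∩ Q).Nonempty := by
              rcases List.eq_nil_or_concat s₁ with rfl | hne'
              · have hcQ : c ∈ Q := by
                  have := hQ' (show c ∈ hProd ([] ++ [c]) by
                    rw [List.nil_append, show hProd [c] = {c} from rfl]; rfl)
                  exact this
                exact ⟨c, by rw [List.nil_append]; exact hc, hcQ⟩
              · have hs₁ne : s₁ ≠ [] := by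
                  rintro rfl; simp_all
                obtain ⟨e, he⟩ := hProd_nonempty s₁
                obtain ⟨w, hwm⟩ := hmul_nonempty e c
                refine ⟨w, ?_, ?_⟩
                · rw [hProd_append hs₁ne hdne]
                  exact mem_sMul.mpr ⟨e, he, c, hc, hwm⟩
                · apply hQ'
                  rw [hProd_append hs₁ne (by simp), show hProd [c] = {c} from rfl]
                  exact mem_sMul.mpr ⟨e, he, c, rfl, hwm⟩
            have hLQ : hProd (s₁ ++ l.drop v) ⊆ Q := hC.2 _ hLne hint
            have hLlen : (s₁ ++ l.drop v).length = n - 1 := by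
              simp only [List.length_append, hs₁len, hdlen]; omega
            obtain ⟨l'', h1', h2', h3'⟩ := ih (n - 1) (by omega) _ hLlen (by omega) hLQ
            exact ⟨l'', h1'.trans hLsub, h2', h3'⟩
    exact ⟨hN.1, fun l hlen _ hQl => key u l hlen (by omega) hQl⟩
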